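/- Let N be a positive integer. The number of cyclic sublattices L of ℤ^N (ℤ-submodules invariant under the cyclic shift s) such that the quotient group ℤ^N/L is torsion-free is exactly 2^{τ(N)}, where τ(N) denotes the number of positive divisors of N. -/

import Mathlib

/-- A torsion-free additive monoid is one whose only element of finite order is `0`
(the December 2024 Mathlib definition, since removed). -/
def AddMonoid.IsTorsionFree (G : Type*) [AddMonoid G] : Prop :=
  ∀ g : G, g ≠ 0 → ¬IsOfFinAddOrder g

set_option linter.unusedSectionVars false
set_option linter.unusedVariables false

open Polynomial Module

namespace Stmt2Aux

lemma exists_subset_assoc {R : Type*} [CommRing R] [IsDomain R] [IsPrincipalIdealRing R]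
    (P : ℕ → R) (t : Finset ℕ) (hP : ∀ d ∈ t, Prime (P d)) :
    ∀ g : R, g ∣ ∏ d ∈ t, P d → ∃ S ⊆ t, Associated g (∏ d ∈ S, P d) := by
  induction t using Finset.induction_on with
  | empty =>
    intro g hg
    exact ⟨∅, Finset.Subset.refl _,
      by simpa [associated_one_iff_isUnit] using isUnit_of_dvd_one (by simpa using hg)⟩
  | @insert a t ha ih =>
    intro g hg
    have hpa : Prime (P a) := hP a (Finset.mem_insert_self _ _)
    have hP' : ∀ d ∈ t, Prime (P d) := fun d hd => hP d (Finset.mem_insert_of_mem hd)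
    rw [Finset.prod_insert ha] at hg
    by_cases hdvd : P a ∣ g
    · obtain ⟨g', rfl⟩ := hdvd
      have hg' : g' ∣ ∏ d ∈ t, P d := (mul_dvd_mul_iff_left hpa.ne_zero).mp hg
      obtain ⟨S, hS, hassoc⟩ := ih hP' g' hg'
      refine ⟨insert a S, Finset.insert_subset_insert _ hS, ?_⟩
      rw [Finset.prod_insert (fun hc => ha (hS hc))]
      exact Associated.mul_left _ hassoc
    · have hcop : IsCoprime g (P a) := ((hpa.irreducible.coprime_iff_not_dvd).mpr hdvd).symm
      obtain ⟨S, hS, h⟩ := ih hP' g (hcop.dvd_of_dvd_mul_left hg)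
      exact ⟨S, hS.trans (Finset.subset_insert a t), h⟩

lemma prime_cyc {d : ℕ} (hd : 0 < d) : Prime (cyclotomic d ℚ) :=
  (cyclotomic.irreducible_rat hd).prime

lemma subset_of_prod_eq {N : ℕ} {S1 S2 : Finset ℕ} (h1 : S1 ⊆ N.divisors) (h2 : S2 ⊆ N.divisors)
    (h : ∏ d ∈ S1, cyclotomic d ℚ = ∏ d ∈ S2, cyclotomic d ℚ) : S1 ⊆ S2 := by
  intro d hd
  have hdpos : 0 < d := Nat.pos_of_mem_divisors (h1 hd)
  have hp := prime_cyc hdpos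
  have hdvd : cyclotomic d ℚ ∣ ∏ e ∈ S2, cyclotomic e ℚ :=
    h ▸ Finset.dvd_prod_of_mem _ hd
  obtain ⟨d', hd', hdvd'⟩ := hp.exists_mem_finset_dvd hdvd
  have hd'pos : 0 < d' := Nat.pos_of_mem_divisors (h2 hd')
  have heq : cyclotomic d ℚ = cyclotomic d' ℚ :=
    Polynomial.eq_of_monic_of_associated (cyclotomic.monic d ℚ) (cyclotomic.monic d' ℚ)
      (hp.irreducible.associated_of_dvd (prime_cyc hd'pos).irreducible hdvd')
  have := cyclotomic_injective (R := ℚ) heq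
  rwa [this]

noncomputable def idealEquiv (N : ℕ) (hN : 0 < N) :
    {S : Finset ℕ // S ⊆ N.divisors} ≃
      {J : Ideal (Polynomial ℚ) // Ideal.span {(X:ℚ[X])^N - 1} ≤ J} := by
  refine Equiv.ofBijective
    (fun S => ⟨Ideal.span {∏ d ∈ S.1, cyclotomic d ℚ}, ?_⟩) ⟨?_, ?_⟩
  · rw [Ideal.span_singleton_le_span_singleton, ← prod_cyclotomic_eq_X_pow_sub_one hN ℚ]
    exact Finset.prod_dvd_prod_of_subset _ _ _ S.2
  · rintro ⟨S1, hS1⟩ ⟨S2, hS2⟩ h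
    simp only [Subtype.mk.injEq] at h ⊢
    have hassoc := Ideal.span_singleton_eq_span_singleton.mp h
    have heq : ∏ d ∈ S1, cyclotomic d ℚ = ∏ d ∈ S2, cyclotomic d ℚ :=
      Polynomial.eq_of_monic_of_associated
        (monic_prod_of_monic _ _ fun d _ => cyclotomic.monic d ℚ)
        (monic_prod_of_monic _ _ fun d _ => cyclotomic.monic d ℚ) hassoc
    exact Finset.Subset.antisymm (subset_of_prod_eq hS1 hS2 heq)
      (subset_of_prod_eq hS2 hS1 heq.symm)
  · rintro ⟨J, hJ⟩
    obtain ⟨g, hg⟩ := (IsPrincipalIdealRing.principal J).principal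
    have hfJ : (X:ℚ[X])^N - 1 ∈ J := hJ (Ideal.mem_span_singleton_self _)
    rw [hg] at hfJ
    have hgd : g ∣ (X:ℚ[X])^N - 1 := Ideal.mem_span_singleton.mp hfJ
    rw [← prod_cyclotomic_eq_X_pow_sub_one hN ℚ] at hgd
    obtain ⟨S, hS, hassoc⟩ := exists_subset_assoc _ N.divisors
      (fun d hd => prime_cyc (Nat.pos_of_mem_divisors hd)) g hgd
    refine ⟨⟨S, hS⟩, ?_⟩
    simp only [Subtype.mk.injEq]
    rw [hg]
    exact (Ideal.span_singleton_eq_span_singleton.mpr hassoc).symm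

lemma card_ideals (N : ℕ) (hN : 0 < N) :
    Nat.card {J : Ideal (Polynomial ℚ) // Ideal.span {(X:ℚ[X])^N - 1} ≤ J} =
      2 ^ N.divisors.card := by
  rw [← Nat.card_congr (idealEquiv N hN),
    Nat.card_congr (Equiv.subtypeEquivRight (fun S => (Finset.mem_powerset (s := S)).symm)),
    Nat.card_eq_finsetCard, Finset.card_powerset]

section
variable (N : ℕ) [NeZero N]
open Fin.NatCast


noncomputable def sQ : (Fin N → ℚ) →ₗ[ℚ] (Fin N → ℚ) := LinearMap.funLeft ℚ ℚ (fun i => i - 1)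

lemma sQ_pow (k : ℕ) (v : Fin N → ℚ) (j : Fin N) : ((sQ N)^k) v j = v (j - (k : Fin N)) := by
  induction k generalizing j with
  | zero => simp
  | succ k ih =>
    rw [pow_succ']
    show ((sQ N ^ k) v) (j - 1) = _
    rw [ih (j - 1)]
    congr 1
    push_cast
    abel

lemma sQ_pow_single (k : ℕ) : ((sQ N)^k) (Pi.single 0 1) = Pi.single (k : Fin N) 1 := by
  funext j
  rw [sQ_pow]
  rcases eq_or_ne j (k : Fin N) with h | h
  · subst h; rw [sub_self]; simp
  · rw [Pi.single_eq_of_ne (fun hh => h (by rwa [sub_eq_zero] at hh)),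
      Pi.single_eq_of_ne h]

noncomputable def phimap : ℚ[X] →ₗ[ℚ[X]] Module.AEval' (sQ N) :=
  LinearMap.toSpanSingleton ℚ[X] _ (Module.AEval'.of (sQ N) (Pi.single 0 1))

lemma phimap_apply (p : ℚ[X]) :
    phimap N p = Module.AEval'.of (sQ N) (Polynomial.aeval (sQ N) p (Pi.single 0 1)) := rfl

lemma aeval_single (p : ℚ[X]) (hp : p.natDegree < N) (j : Fin N) :
    Polynomial.aeval (sQ N) p (Pi.single 0 1) j = p.coeff (j : ℕ) := by
  rw [Polynomial.aeval_eq_sum_range]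
  simp only [LinearMap.coe_sum, Finset.sum_apply, LinearMap.smul_apply, Pi.smul_apply,
    sQ_pow_single]
  rw [Finset.sum_eq_single (j : ℕ)]
  · rw [Fin.cast_val_eq_self, Pi.single_eq_same, smul_eq_mul, mul_one]
  · intro i hi hne
    rw [Pi.single_eq_of_ne, smul_zero]
    intro hc
    apply hne
    have : i < N := lt_of_lt_of_le (Finset.mem_range.mp hi) hp
    rw [← Fin.val_cast_of_lt this, hc]
  · intro hj
    rw [Polynomial.coeff_eq_zero_of_natDegree_lt, zero_smul]
    have := Finset.mem_range.not.mp hj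
    omega

lemma X_pow_sub_one_mem_ker : (X:ℚ[X])^N - 1 ∈ LinearMap.ker (phimap N) := by
  rw [LinearMap.mem_ker, phimap_apply, map_sub, map_pow, Polynomial.aeval_X, map_one]
  have : ((sQ N)^N - 1) (Pi.single 0 1) = 0 := by
    rw [LinearMap.sub_apply, Module.End.one_apply, sQ_pow_single, Fin.natCast_self, sub_self]
  rw [this, map_zero]

lemma phimap_ker : LinearMap.ker (phimap N) = Ideal.span {(X:ℚ[X])^N - 1} := by
  have hNpos : 0 < N := Nat.pos_of_ne_zero (NeZero.ne N)
  apply le_antisymm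
  · intro p hp
    have hm : ((X:ℚ[X])^N - 1).Monic := by
      simpa using Polynomial.monic_X_pow_sub_C (1:ℚ) (NeZero.ne N)
    rw [Ideal.mem_span_singleton, ← Polynomial.modByMonic_eq_zero_iff_dvd hm]
    set r := p %ₘ ((X:ℚ[X])^N - 1) with hrdef
    have hr : r ∈ LinearMap.ker (phimap N) := by
      have : r = p - (p /ₘ ((X:ℚ[X])^N - 1)) • ((X:ℚ[X])^N - 1) := by
        rw [smul_eq_mul, mul_comm]
        have h := Polynomial.modByMonic_add_div p ((X:ℚ[X])^N - 1)
        rw [hrdef]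
        linear_combination h
      rw [this]
      exact sub_mem hp (Submodule.smul_mem _ _ (X_pow_sub_one_mem_ker N))
    rcases eq_or_ne r 0 with h0 | h0
    · exact h0
    have hdeg : r.natDegree < N := by
      rw [Polynomial.natDegree_lt_iff_degree_lt h0]
      calc r.degree < ((X:ℚ[X])^N - 1).degree := Polynomial.degree_modByMonic_lt p hm
      _ = (N : WithBot ℕ) := by simpa using Polynomial.degree_X_pow_sub_C hNpos (1:ℚ)
    have hv : Polynomial.aeval (sQ N) r (Pi.single 0 1) = 0 := by
      rw [LinearMap.mem_ker, phimap_apply] at hr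
      exact (LinearEquiv.map_eq_zero_iff _).mp hr
    exfalso; apply h0
    ext k
    rcases lt_or_ge k N with hk | hk
    · have := congrFun hv ⟨k, hk⟩
      rw [aeval_single N r hdeg ⟨k, hk⟩] at this
      simpa using this
    · simp [Polynomial.coeff_eq_zero_of_natDegree_lt (lt_of_lt_of_le hdeg hk)]
  · rw [Ideal.span_le, Set.singleton_subset_iff]
    exact X_pow_sub_one_mem_ker N

lemma phimap_surjective : Function.Surjective (phimap N) := by
  intro m
  set v := (Module.AEval'.of (sQ N)).symm m with hv
  refine ⟨∑ i : Fin N, Polynomial.C (v i) * X ^ (i : ℕ), ?_⟩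
  have hdeg : (∑ i : Fin N, Polynomial.C (v i) * X ^ (i : ℕ)).natDegree < N := by
    have hNpos : 0 < N := Nat.pos_of_ne_zero (NeZero.ne N)
    refine lt_of_le_of_lt (Polynomial.natDegree_sum_le_of_forall_le Finset.univ _
      (fun i _ => le_trans (Polynomial.natDegree_C_mul_X_pow_le _ _) (by omega : (i:ℕ) ≤ N - 1))) ?_
    omega
  rw [phimap_apply]
  have hcoeff : ∀ j : Fin N, (∑ i : Fin N, Polynomial.C (v i) * X ^ (i : ℕ)).coeff (j:ℕ) = v j := by
    intro j
    rw [Polynomial.finset_sum_coeff, Finset.sum_eq_single j]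
    · simp
    · intro i _ hne
      rw [Polynomial.coeff_C_mul, Polynomial.coeff_X_pow,
        if_neg (fun h => hne (Fin.val_inj.mp h.symm)), mul_zero]
    · simp
  have : Polynomial.aeval (sQ N) (∑ i : Fin N, Polynomial.C (v i) * X ^ (i : ℕ)) (Pi.single 0 1) = v := by
    funext j
    rw [aeval_single N _ hdeg j, hcoeff j]
  rw [this, hv, LinearEquiv.apply_symm_apply]



noncomputable def sZ : (Fin N → ℤ) →ₗ[ℤ] (Fin N → ℤ) := LinearMap.funLeft ℤ ℤ (fun i => i - 1)

noncomputable def Phi : (Fin N → ℤ) →ₗ[ℤ] (Fin N → ℚ) where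
  toFun a := fun i => (a i : ℚ)
  map_add' a b := by funext i; push_cast; simp
  map_smul' z a := by
    funext i
    simp only [Pi.smul_apply, smul_eq_mul, zsmul_eq_mul, RingHom.id_apply]
    push_cast
    ring

lemma Phi_apply (a : Fin N → ℤ) (i : Fin N) : Phi N a i = (a i : ℚ) := rfl

lemma Phi_injective : Function.Injective (Phi N) := fun a b h =>
  funext fun i => Int.cast_injective (congrFun h i)

lemma Phi_sZ (a : Fin N → ℤ) : Phi N (sZ N a) = sQ N (Phi N a) := rfl

lemma Phi_zsmul (n : ℤ) (a : Fin N → ℤ) : Phi N (n • a) = (n : ℚ) • Phi N a := by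
  rw [map_smul, Int.cast_smul_eq_zsmul]

lemma tf_iff (L : Submodule ℤ (Fin N → ℤ)) :
    AddMonoid.IsTorsionFree ((Fin N → ℤ) ⧸ L) ↔
      ∀ (n : ℤ) (a : Fin N → ℤ), n ≠ 0 → n • a ∈ L → a ∈ L := by
  constructor
  · intro h n a hn hna
    by_contra ha
    have hmk : (Submodule.Quotient.mk a : _ ⧸ L) ≠ 0 := by
      simpa [Submodule.Quotient.mk_eq_zero] using ha
    apply h _ hmk
    rw [isOfFinAddOrder_iff_nsmul_eq_zero]
    refine ⟨n.natAbs, Int.natAbs_pos.mpr hn, ?_⟩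
    have h1 : ((n.natAbs : ℤ)) • a ∈ L := by
      rcases Int.natAbs_eq n with h' | h'
      · rw [← h']; exact hna
      · have : ((n.natAbs : ℤ)) = -n := by omega
        rw [this, neg_smul]; exact neg_mem hna
    have : (n.natAbs : ℕ) • (Submodule.Quotient.mk a : _ ⧸ L) =
        Submodule.Quotient.mk (((n.natAbs : ℤ)) • a) := by
      rw [← Submodule.Quotient.mk_smul, natCast_zsmul]
    rw [this, Submodule.Quotient.mk_eq_zero]
    exact h1
  · intro h g hg hfin
    obtain ⟨a, rfl⟩ := Submodule.Quotient.mk_surjective L g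
    rw [isOfFinAddOrder_iff_nsmul_eq_zero] at hfin
    obtain ⟨k, hk, hka⟩ := hfin
    apply hg
    rw [Submodule.Quotient.mk_eq_zero]
    refine h k a (by exact_mod_cast hk.ne') ?_
    rw [← Submodule.Quotient.mk_eq_zero]
    rw [← natCast_zsmul] at hka
    rw [Submodule.Quotient.mk_smul]
    exact hka

lemma exists_int_smul_mem_int_span {S : Set (Fin N → ℚ)} {x : Fin N → ℚ}
    (hx : x ∈ Submodule.span ℚ S) :
    ∃ n : ℤ, n ≠ 0 ∧ n • x ∈ Submodule.span ℤ S := by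
  induction hx using Submodule.span_induction with
  | mem y hy => exact ⟨1, one_ne_zero, by simpa using Submodule.subset_span hy⟩
  | zero => exact ⟨1, one_ne_zero, by simp⟩
  | add y z _ _ hy hz =>
    obtain ⟨m, hm, hym⟩ := hy
    obtain ⟨k, hk, hzk⟩ := hz
    refine ⟨m * k, mul_ne_zero hm hk, ?_⟩
    rw [smul_add]
    have h1 : (m * k) • y = k • (m • y) := by rw [mul_comm, mul_smul]
    have h2 : (m * k) • z = m • (k • z) := mul_smul _ _ _
    rw [h1, h2]
    exact add_mem (Submodule.smul_mem _ _ hym) (Submodule.smul_mem _ _ hzk)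
  | smul q y _ hy =>
    obtain ⟨m, hm, hym⟩ := hy
    refine ⟨m * (q.den : ℤ), mul_ne_zero hm (Int.natCast_ne_zero.mpr q.den_nz), ?_⟩
    have hden : (q.den : ℚ) * q = (q.num : ℚ) := by
      rw [mul_comm]
      exact ((div_eq_iff (by exact_mod_cast q.den_nz : ((q.den : ℚ)) ≠ 0)).mp
        (Rat.num_div_den q)).symm
    have key : ((m * (q.den : ℤ))) • (q • y) = q.num • (m • y) := by
      rw [← Int.cast_smul_eq_zsmul ℚ, ← Int.cast_smul_eq_zsmul ℚ q.num,
        ← Int.cast_smul_eq_zsmul ℚ m, smul_smul, smul_smul]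
      congr 1
      push_cast
      linear_combination (m : ℚ) * hden
    rw [key]
    exact Submodule.smul_mem _ _ hym

lemma exists_denominator (w : Fin N → ℚ) :
    ∃ n : ℤ, n ≠ 0 ∧ ∃ a : Fin N → ℤ, Phi N a = (n : ℚ) • w := by
  refine ⟨((∏ i, (w i).den : ℕ) : ℤ), ?_,
    fun i => (w i).num * (∏ j ∈ Finset.univ.erase i, ((w j).den : ℤ)), ?_⟩
  · exact_mod_cast (Finset.prod_pos (fun i _ => (w i).pos)).ne'
  · funext i
    have hden : ((w i).den : ℚ) * w i = ((w i).num : ℚ) := by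
      rw [mul_comm]
      exact ((div_eq_iff (by exact_mod_cast (w i).den_nz : (((w i).den : ℚ)) ≠ 0)).mp
        (Rat.num_div_den (w i))).symm
    show (((w i).num * (∏ j ∈ Finset.univ.erase i, ((w j).den : ℤ)) : ℤ) : ℚ) = _
    rw [Pi.smul_apply, smul_eq_mul]
    push_cast
    rw [← Finset.mul_prod_erase _ _ (Finset.mem_univ i)]
    linear_combination (-(∏ j ∈ Finset.univ.erase i, ((w j).den : ℚ))) * hden

noncomputable def latticeEquiv :
    {L : Submodule ℤ (Fin N → ℤ) //
        (∀ a ∈ L, sZ N a ∈ L) ∧ AddMonoid.IsTorsionFree ((Fin N → ℤ) ⧸ L)} ≃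
      {W : Submodule ℚ (Fin N → ℚ) // W ≤ W.comap (sQ N)} where
  toFun L := ⟨Submodule.span ℚ (Phi N '' L.1), by
    rw [Submodule.span_le]
    rintro _ ⟨a, ha, rfl⟩
    show sQ N (Phi N a) ∈ Submodule.span ℚ (Phi N '' L.1)
    rw [← Phi_sZ]
    exact Submodule.subset_span ⟨sZ N a, L.2.1 a ha, rfl⟩⟩
  invFun W := ⟨(W.1.restrictScalars ℤ).comap (Phi N), ⟨fun a ha => by
      show Phi N (sZ N a) ∈ W.1
      rw [Phi_sZ]
      exact W.2 ha, by
      rw [tf_iff]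
      intro n a hn hna
      show Phi N a ∈ W.1
      have h1 : (n : ℚ) • Phi N a ∈ W.1 := by
        rw [← Phi_zsmul]; exact hna
      have h2 := W.1.smul_mem ((n : ℚ))⁻¹ h1
      rwa [smul_smul, inv_mul_cancel₀ (by exact_mod_cast hn), one_smul] at h2⟩⟩
  left_inv := by
    rintro ⟨L, hcyc, htf⟩
    apply Subtype.ext
    apply le_antisymm
    · intro a ha
      have ha' : Phi N a ∈ Submodule.span ℚ (Phi N '' (L : Set _)) := ha
      obtain ⟨n, hn, hmem⟩ := exists_int_smul_mem_int_span N ha'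
      have hspan : Submodule.span ℤ (Phi N '' (L : Set _)) = Submodule.map (Phi N) L := by
        rw [Submodule.span_image, Submodule.span_eq]
      rw [hspan] at hmem
      obtain ⟨b, hb, hPhib⟩ := hmem
      have hba : b = n • a := Phi_injective N (hPhib.trans (map_smul (Phi N) n a).symm)
      rw [hba] at hb
      exact (tf_iff N L).mp htf n a hn hb
    · intro a ha
      exact Submodule.subset_span ⟨a, ha, rfl⟩
  right_inv := by
    rintro ⟨W, hW⟩
    apply Subtype.ext
    apply le_antisymm
    · rw [Submodule.span_le]
      rintro _ ⟨a, ha, rfl⟩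
      exact ha
    · intro w hw
      obtain ⟨n, hn, a, ha⟩ := exists_denominator N w
      have haW : Phi N a ∈ W := by rw [ha]; exact W.smul_mem _ hw
      have hmem : Phi N a ∈
          Submodule.span ℚ (Phi N '' (((W.restrictScalars ℤ).comap (Phi N)) : Set _)) :=
        Submodule.subset_span ⟨a, haW, rfl⟩
      have hww : w = ((n : ℚ))⁻¹ • Phi N a := by
        rw [ha, smul_smul, inv_mul_cancel₀ (by exact_mod_cast hn), one_smul]
      rw [hww]
      exact Submodule.smul_mem _ _ hmem


lemma hidx (N : ℕ) [NeZero N] (hN : 0 < N) (i : Fin N) :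
    (⟨((i : ℕ) + (N - 1)) % N, Nat.mod_lt _ hN⟩ : Fin N) = i - 1 := by
  apply Fin.ext
  rw [Fin.sub_def]
  show ((i : ℕ) + (N - 1)) % N = ((N - (1 : Fin N).val) + i) % N
  rcases eq_or_ne N 1 with h | h
  · subst h; simp [Nat.mod_one]
  · have h1 : (1 : Fin N).val = 1 := by
      rw [Fin.val_one']
      exact Nat.mod_eq_of_lt (by omega)
    rw [h1, Nat.add_comm]

end

end Stmt2Aux

open Stmt2Aux in
/-- For a positive integer `N`, the number of cyclic sublattices `L` of `ℤ^N`
(`ℤ`-submodules invariant under the cyclic shift `s`, where `(s a) i = a ((i + (N-1)) % N)`)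
with torsion-free quotient `ℤ^N/L` is exactly `2^{τ(N)}`, where `τ(N)` is the number of
positive divisors of `N`. -/
theorem stmt_2 (N : ℕ) (hN : 0 < N) :
    Nat.card {L : Submodule ℤ (Fin N → ℤ) //
        (∀ a ∈ L, (fun i : Fin N => a ⟨((i : ℕ) + (N - 1)) % N, Nat.mod_lt _ hN⟩) ∈ L) ∧
        AddMonoid.IsTorsionFree ((Fin N → ℤ) ⧸ L)} = 2 ^ N.divisors.card := by
  haveI : NeZero N := ⟨hN.ne'⟩
  have hcond : ∀ (L : Submodule ℤ (Fin N → ℤ)) (a : Fin N → ℤ),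
      ((fun i : Fin N => a ⟨((i : ℕ) + (N - 1)) % N, Nat.mod_lt _ hN⟩) ∈ L) ↔ sZ N a ∈ L := by
    intro L a
    have h : (fun i : Fin N => a ⟨((i : ℕ) + (N - 1)) % N, Nat.mod_lt _ hN⟩) = sZ N a := by
      funext i
      rw [hidx N hN i]
      rfl
    rw [h]
  have e0 : {L : Submodule ℤ (Fin N → ℤ) //
        (∀ a ∈ L, (fun i : Fin N => a ⟨((i : ℕ) + (N - 1)) % N, Nat.mod_lt _ hN⟩) ∈ L) ∧
        AddMonoid.IsTorsionFree ((Fin N → ℤ) ⧸ L)} ≃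
      {L : Submodule ℤ (Fin N → ℤ) //
        (∀ a ∈ L, sZ N a ∈ L) ∧ AddMonoid.IsTorsionFree ((Fin N → ℤ) ⧸ L)} :=
    Equiv.subtypeEquivRight (fun L =>
      and_congr (forall₂_congr fun a _ => hcond L a) Iff.rfl)
  have hls : Algebra.lsmul ℚ ℚ (Fin N → ℚ) (sQ N) = sQ N := LinearMap.ext fun m => rfl
  have einv : {W : Submodule ℚ (Fin N → ℚ) // W ≤ W.comap (sQ N)} ≃
      ((Algebra.lsmul ℚ ℚ (Fin N → ℚ) (sQ N)).invtSubmodule) :=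
    Equiv.subtypeEquivRight (fun W => by
      rw [Module.End.mem_invtSubmodule, hls])
  have e3 : Submodule ℚ[X] (Module.AEval' (sQ N)) ≃
      Submodule ℚ[X] (ℚ[X] ⧸ LinearMap.ker (phimap N)) :=
    (Submodule.orderIsoMapComap
      (LinearMap.quotKerEquivOfSurjective (phimap N) (phimap_surjective N))).symm.toEquiv
  have e4 : Submodule ℚ[X] (ℚ[X] ⧸ LinearMap.ker (phimap N)) ≃
      {J : Submodule ℚ[X] ℚ[X] // LinearMap.ker (phimap N) ≤ J} :=
    (Submodule.comapMkQRelIso (LinearMap.ker (phimap N))).toEquiv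
  have e5 : {J : Submodule ℚ[X] ℚ[X] // LinearMap.ker (phimap N) ≤ J} ≃
      {J : Ideal ℚ[X] // Ideal.span {(X : ℚ[X]) ^ N - 1} ≤ J} :=
    Equiv.subtypeEquivRight (fun J => by rw [phimap_ker])
  have E := (((((e0.trans (latticeEquiv N)).trans einv).trans
    (Module.AEval.mapSubmodule ℚ (Fin N → ℚ) (sQ N)).toEquiv).trans e3).trans e4).trans e5
  rw [Nat.card_congr E]
  exact card_ideals N hN
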